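/- Let μ be the Thue–Morse morphism and let k ≥ 0. Set x = μ^{2k}(0) and w = 0·x·x. Then w is an overlap, but no proper contiguous subword of w is an overlap. -/
import Mathlib

/-- An overlap: a word of the form `a·y·a·y·a` where `a` is a single letter
and `y` is a (possibly empty) word. -/
def IsOverlap {α : Type*} (w : List α) : Prop :=
  ∃ (a : α) (y : List α), w = [a] ++ y ++ [a] ++ y ++ [a]

/-- The Thue–Morse morphism `μ`, with `μ(0) = 01` and `μ(1) = 10`,
applied letterwise to a word over `{0,1}`. -/
def mu : List (Fin 2) → List (Fin 2) :=
  fun w => w.flatMap fun a => if a = 0 then [0, 1] else [1, 0]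

namespace ThueHelpers

lemma mu_cons (a : Fin 2) (v : List (Fin 2)) : mu (a :: v) = a :: (a + 1) :: mu v := by
  fin_cases a <;> rfl

lemma mu_append (u v : List (Fin 2)) : mu (u ++ v) = mu u ++ mu v := by
  simp [mu]

lemma mu_length (v : List (Fin 2)) : (mu v).length = 2 * v.length := by
  induction v with
  | nil => rfl
  | cons a v ih => rw [mu_cons]; simp [ih]; omega

lemma fin2_add_two (x : Fin 2) : x + 1 + 1 = x := by fin_cases x <;> rfl

lemma fin2_ne_add_one (x : Fin 2) : x ≠ x + 1 := by fin_cases x <;> decide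

lemma mu_getD_even : ∀ (v : List (Fin 2)) (i : ℕ), i < v.length →
    (mu v).getD (2 * i) 0 = v.getD i 0 := by
  intro v
  induction v with
  | nil => intro i h; simp at h
  | cons a v ih =>
    intro i h
    cases i with
    | zero => rw [mu_cons]; rfl
    | succ i =>
      rw [mu_cons, show 2 * (i + 1) = 2 * i + 1 + 1 from by ring]
      simp only [List.getD_cons_succ]
      exact ih i (by simpa using h)

lemma mu_getD_odd : ∀ (v : List (Fin 2)) (i : ℕ), i < v.length →
    (mu v).getD (2 * i + 1) 0 = v.getD i 0 + 1 := by
  intro v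
  induction v with
  | nil => intro i h; simp at h
  | cons a v ih =>
    intro i h
    cases i with
    | zero => rw [mu_cons]; rfl
    | succ i =>
      rw [mu_cons, show 2 * (i + 1) + 1 = (2 * i + 1) + 1 + 1 from by ring]
      simp only [List.getD_cons_succ]
      exact ih i (by simpa using h)

/-- An overlap of period `n` sits inside `w` at position `p`. -/
def OverlapAt (w : List (Fin 2)) (p n : ℕ) : Prop :=
  1 ≤ n ∧ p + 2 * n < w.length ∧
    ∀ j ≤ n, w.getD (p + j) 0 = w.getD (p + j + n) 0

/-- Localized Thue lemma: an overlap in `μ(v)` projects to an overlap of half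
the period in `v`. -/
lemma step {v : List (Fin 2)} {p n : ℕ} (h : OverlapAt (mu v) p n) :
    ∃ m, n = 2 * m ∧ OverlapAt v (p / 2) m := by
  obtain ⟨hn, hlen, hper⟩ := h
  rw [mu_length] at hlen
  rcases Nat.even_or_odd n with he | ho
  · obtain ⟨m, hm⟩ := he
    have hm' : n = 2 * m := by omega
    refine ⟨m, hm', by omega, by omega, ?_⟩
    intro j hj
    have hper2 := hper (2 * j) (by omega)
    rcases Nat.even_or_odd p with hp | hp
    · obtain ⟨q, hq⟩ := hp
      have hb1 : q + j < v.length := by omega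
      have hb2 : q + j + m < v.length := by omega
      rw [show p + 2 * j = 2 * (q + j) from by omega,
        show 2 * (q + j) + n = 2 * (q + j + m) from by omega,
        mu_getD_even _ _ hb1, mu_getD_even _ _ hb2] at hper2
      rw [show p / 2 = q from by omega]
      exact hper2
    · obtain ⟨q, hq⟩ := hp
      have hb1 : q + j < v.length := by omega
      have hb2 : q + j + m < v.length := by omega
      rw [show p + 2 * j = 2 * (q + j) + 1 from by omega,
        show 2 * (q + j) + 1 + n = 2 * (q + j + m) + 1 from by omega,
        mu_getD_odd _ _ hb1, mu_getD_odd _ _ hb2] at hper2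
      rw [show p / 2 = q from by omega]
      exact add_right_cancel hper2
  · exfalso
    obtain ⟨c, hc⟩ := ho
    have alt : ∀ j, j ≤ n → (mu v).getD (p + j) 0 =
        (if j % 2 = 0 then (mu v).getD p 0 else (mu v).getD p 0 + 1) := by
      intro j
      induction j with
      | zero => intro _; simp
      | succ j ih =>
        intro hj
        have hj' : j ≤ n := by omega
        have ihj := ih hj'
        have hstep : (mu v).getD (p + j + 1) 0 = (mu v).getD (p + j) 0 + 1 := by
          rcases Nat.even_or_odd (p + j) with hpj | hpj
          · obtain ⟨t, ht⟩ := hpj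
            have hb : t < v.length := by omega
            rw [show p + j + 1 = 2 * t + 1 from by omega, show p + j = 2 * t from by omega,
              mu_getD_odd _ _ hb, mu_getD_even _ _ hb]
          · obtain ⟨t, ht⟩ := hpj
            have hb : t + c + 1 < v.length := by omega
            have e1 := hper j hj'
            have e2 := hper (j + 1) hj
            rw [show p + j + n = 2 * (t + c + 1) from by omega,
              mu_getD_even _ _ hb] at e1
            rw [show p + (j + 1) = p + j + 1 from by omega,
              show p + j + 1 + n = 2 * (t + c + 1) + 1 from by omega,
              mu_getD_odd _ _ hb] at e2
            rw [e1, e2]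
        rw [show p + (j + 1) = p + j + 1 from by omega, hstep, ihj]
        by_cases hj2 : j % 2 = 0
        · have h2 : (j + 1) % 2 ≠ 0 := by omega
          simp [hj2, h2]
        · have h2 : (j + 1) % 2 = 0 := by omega
          simp [hj2, h2, fin2_add_two]
    have h0 := hper 0 (by omega)
    simp only [Nat.add_zero] at h0
    have hnn := alt n le_rfl
    rw [if_neg (by omega : ¬ n % 2 = 0)] at hnn
    exact fin2_ne_add_one _ (h0.trans hnn)

lemma getD_drop (W : List (Fin 2)) (d i : ℕ) :
    (W.drop d).getD i 0 = W.getD (d + i) 0 := by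
  simp [List.getD_eq_getElem?_getD, List.getElem?_drop]

lemma shift {W : List (Fin 2)} {d p n : ℕ} (h : OverlapAt (W.drop d) p n) :
    OverlapAt W (d + p) n := by
  obtain ⟨hn, hlen, hper⟩ := h
  rw [List.length_drop] at hlen
  refine ⟨hn, by omega, ?_⟩
  intro j hj
  have := hper j hj
  rw [getD_drop, getD_drop] at this
  rw [show d + p + j + n = d + (p + j + n) from by omega,
    show d + p + j = d + (p + j) from by omega]
  exact this

lemma Zperiod (Z : List (Fin 2)) (a : Fin 2) (hZ : Z.getD 0 0 = a) (hZn : 0 < Z.length) :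
    ∀ j ≤ Z.length, (Z ++ (Z ++ [a])).getD j 0 = (Z ++ (Z ++ [a])).getD (j + Z.length) 0 := by
  intro j hj
  rcases lt_or_eq_of_le hj with hlt | heq
  · rw [List.getD_append _ _ _ _ hlt,
      List.getD_append_right _ _ _ _ (by omega),
      show j + Z.length - Z.length = j from by omega,
      List.getD_append _ _ _ _ hlt]
  · subst heq
    rw [List.getD_append_right _ _ _ _ le_rfl, Nat.sub_self,
      List.getD_append _ _ _ _ hZn, hZ,
      List.getD_append_right _ _ _ _ (by omega : Z.length ≤ Z.length + Z.length),
      show Z.length + Z.length - Z.length = Z.length from by omega,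
      List.getD_append_right _ _ _ _ le_rfl, Nat.sub_self]
    rfl

lemma overlap_infix {u w : List (Fin 2)} (hu : IsOverlap u) (hw : u <:+: w) :
    ∃ p n, OverlapAt w p n ∧ u.length = 2 * n + 1 ∧
      (p = 0 → p + 2 * n + 1 = w.length → u = w) := by
  obtain ⟨a, y, hay⟩ := hu
  obtain ⟨s, t, hst⟩ := hw
  have hzu : u = (a :: y) ++ ((a :: y) ++ [a]) := by rw [hay]; simp
  have hulen : u.length = 2 * (a :: y).length + 1 := by
    rw [hzu]; simp [List.length_append]; omega
  have hwlen : w.length = s.length + u.length + t.length := by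
    have h := congrArg List.length hst
    simp only [List.length_append] at h
    omega
  have huper := Zperiod (a :: y) a rfl (by simp)
  rw [← hzu] at huper
  have hwu : ∀ i < u.length, w.getD (s.length + i) 0 = u.getD i 0 := by
    intro i hi
    rw [← hst, List.append_assoc, List.getD_append_right _ _ _ _ (by omega),
      show s.length + i - s.length = i from by omega,
      List.getD_append _ _ _ _ hi]
  refine ⟨s.length, (a :: y).length, ⟨by simp, by omega, ?_⟩, hulen, ?_⟩
  · intro j hj
    rw [show s.length + j + (a :: y).length = s.length + (j + (a :: y).length) from by omega,
      hwu j (by omega), hwu (j + (a :: y).length) (by omega)]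
    exact huper j hj
  · intro hp hlen
    have hs : s = [] := List.length_eq_zero_iff.mp hp
    have ht : t = [] := List.length_eq_zero_iff.mp (by omega)
    rw [hs, ht] at hst
    simpa using hst

lemma iterate_two_mul_succ (k : ℕ) (z : List (Fin 2)) :
    mu^[2 * (k + 1)] z = mu (mu (mu^[2 * k] z)) := by
  rw [show 2 * (k + 1) = 2 + 2 * k from by ring, Function.iterate_add_apply]
  rfl

lemma xlen (k : ℕ) : (mu^[2 * k] ([0] : List (Fin 2))).length = 4 ^ k := by
  induction k with
  | zero => rfl
  | succ k ih =>
    rw [iterate_two_mul_succ, mu_length, mu_length, ih, pow_succ]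
    ring

lemma key (k : ℕ) : ∀ p n,
    OverlapAt ((0 : Fin 2) :: (mu^[2 * k] [0] ++ mu^[2 * k] [0])) p n →
    p = 0 ∧ n = 4 ^ k := by
  induction k with
  | zero =>
    intro p n h
    obtain ⟨h1, h2, _⟩ := h
    simp at h2
    constructor <;> omega
  | succ k ih =>
    intro p n h
    have e2 : (0 : Fin 2) :: (mu^[2 * (k + 1)] [0] ++ mu^[2 * (k + 1)] [0])
        = (mu (mu ((0 : Fin 2) :: (mu^[2 * k] [0] ++ mu^[2 * k] [0])))).drop 3 := by
      rw [iterate_two_mul_succ, mu_cons, mu_append, mu_cons, mu_cons, mu_append]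
      rfl
    rw [e2] at h
    have h3 := shift h
    obtain ⟨m1, hm1, h4⟩ := step h3
    obtain ⟨m, hm, h5⟩ := step h4
    obtain ⟨hp, hmm⟩ := ih _ _ h5
    constructor
    · omega
    · rw [hm1, hm, hmm, pow_succ]; ring

end ThueHelpers

open ThueHelpers in
/-- For `x = μ^{2k}(0)`, the word `w = 0·x·x` is an overlap, but no proper
contiguous subword of `w` is an overlap. -/
theorem zero_mu_mu_is_minimal_overlap (k : ℕ) :
    IsOverlap ((0 : Fin 2) :: (mu^[2 * k] [0] ++ mu^[2 * k] [0])) ∧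
    ∀ u : List (Fin 2),
      u <:+: (0 : Fin 2) :: (mu^[2 * k] [0] ++ mu^[2 * k] [0]) →
      u ≠ (0 : Fin 2) :: (mu^[2 * k] [0] ++ mu^[2 * k] [0]) →
      ¬ IsOverlap u := by
  have ends : ∃ y : List (Fin 2), mu^[2 * k] [0] = y ++ [0] := by
    induction k with
    | zero => exact ⟨[], rfl⟩
    | succ k ih =>
      obtain ⟨y, hy⟩ := ih
      refine ⟨mu (mu y) ++ [0, 1, 1], ?_⟩
      rw [iterate_two_mul_succ, hy, mu_append, mu_append,
        show mu (mu [0]) = [0, 1, 1, 0] from rfl]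
      simp
  constructor
  · obtain ⟨y, hy⟩ := ends
    exact ⟨0, y, by rw [hy]; simp⟩
  · intro u hinf hne hover
    obtain ⟨p, n, hA, hulen, himp⟩ := overlap_infix hover hinf
    obtain ⟨hp, hn⟩ := key k p n hA
    apply hne
    apply himp hp
    have hx := xlen k
    simp only [List.length_cons, List.length_append, hx]
    omega
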